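/- Every V-polyhedron A ⊆ ℝᵈ is an H-polyhedron. Furthermore, if A ≠ ℝᵈ, A has nonempty interior, and the origin lies in the interior of A, then A can be written in the form A = {x ∈ ℝᵈ : Yx ≤ 𝟏} for some real matrix Y. -/

import Mathlib

open RealInnerProductSpace Pointwise

/-- The cone (set of nonnegative linear combinations) generated by the vectors
`v 0, …, v (q-1)`. -/
def coneOf {d q : ℕ} (v : Fin q → EuclideanSpace ℝ (Fin d)) :
    Set (EuclideanSpace ℝ (Fin d)) :=
  {x | ∃ μ : Fin q → ℝ, (∀ j, 0 ≤ μ j) ∧ x = ∑ j, μ j • v j}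

/-- A `V`-polyhedron: `conv(Y) + cone(V)` for finite sets `Y` of points and
`V` of vectors. -/
def IsVPolyhedron {d : ℕ} (A : Set (EuclideanSpace ℝ (Fin d))) : Prop :=
  ∃ (p q : ℕ) (y : Fin p → EuclideanSpace ℝ (Fin d))
    (v : Fin q → EuclideanSpace ℝ (Fin d)),
    A = convexHull ℝ (Set.range y) + coneOf v

/-- An `H`-polyhedron: a finite intersection of closed half-spaces
`{x | ⟪a, x⟫ ≤ b}` (the empty intersection, i.e. `ℝᵈ`, is allowed). -/
def IsHPolyhedron {d : ℕ} (A : Set (EuclideanSpace ℝ (Fin d))) : Prop :=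
  ∃ (p : ℕ) (a : Fin p → EuclideanSpace ℝ (Fin d)) (b : Fin p → ℝ),
    A = ⋂ i, {x : EuclideanSpace ℝ (Fin d) | ⟪a i, x⟫ ≤ b i}

open Finset

/-- H-polyhedron with arbitrary finite index types. -/
def HP {α : Type} [Fintype α] (S : Set (α → ℝ)) : Prop :=
  ∃ (ι : Type) (_ : Fintype ι) (a : ι → α → ℝ) (b : ι → ℝ),
    S = {x | ∀ k, ∑ i, a k i * x i ≤ b k}

lemma HP_reindex {α β : Type} [Fintype α] [Fintype β] (e : α ≃ β)
    {S : Set (α → ℝ)} (hS : HP S) : HP ((fun x : α → ℝ => x ∘ e.symm) '' S) := by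
  obtain ⟨ι, _, a, b, rfl⟩ := hS
  refine ⟨ι, ‹_›, fun k j => a k (e.symm j), b, ?_⟩
  ext y
  constructor
  · rintro ⟨x, hx, rfl⟩
    intro k
    have := hx k
    rw [Fintype.sum_equiv e (fun i => a k i * x i)
      (fun j => a k (e.symm j) * (x ∘ e.symm) j) (fun i => by simp)] at this
    exact this
  · intro hy
    refine ⟨y ∘ e, fun k => ?_, by ext i; simp⟩
    have := hy k
    rw [← Fintype.sum_equiv e (fun i => a k i * (y ∘ e) i) (fun j => a k (e.symm j) * y j)
      (fun i => by simp)] at this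
    exact this

lemma HP_FM {α : Type} [Fintype α] {S : Set (Option α → ℝ)} (hS : HP S) :
    HP ((fun x : Option α → ℝ => x ∘ some) '' S) := by
  classical
  obtain ⟨ι, _, a, b, rfl⟩ := hS
  set c : ι → ℝ := fun k => a k none with hc
  set A : ι → α → ℝ := fun k i => a k (some i) with hA
  -- new index type
  refine ⟨{k // c k = 0} ⊕ ({k // 0 < c k} × {l // c l < 0}), inferInstance,
    Sum.elim (fun k i => A k.1 i)
      (fun kl i => c kl.1.1 * A kl.2.1 i - c kl.2.1 * A kl.1.1 i),
    Sum.elim (fun k => b k.1) (fun kl => c kl.1.1 * b kl.2.1 - c kl.2.1 * b kl.1.1), ?_⟩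
  ext y
  simp only [Set.mem_image, Set.mem_setOf_eq, Sum.forall, Sum.elim_inl, Sum.elim_inr,
    Subtype.forall, Prod.forall]
  constructor
  · rintro ⟨x, hx, rfl⟩
    have key : ∀ k, (∑ i, A k i * x (some i)) + c k * x none ≤ b k := by
      intro k
      have := hx k
      rwa [Fintype.sum_option, add_comm] at this
    constructor
    · intro k hk
      have := key k
      rw [hk] at this; simpa using this
    · intro k hk l hl
      have h1 := key k
      have h2 := key l
      have expand : ∑ i, (c k * A l i - c l * A k i) * x (some i)
          = c k * (∑ i, A l i * x (some i)) - c l * (∑ i, A k i * x (some i)) := by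
        rw [Finset.mul_sum, Finset.mul_sum, ← Finset.sum_sub_distrib]
        exact Finset.sum_congr rfl fun i _ => by ring
      show ∑ i, (c k * A l i - c l * A k i) * (x ∘ some) i ≤ _
      simp only [Function.comp_apply]
      rw [expand]
      nlinarith [mul_le_mul_of_nonneg_left h2 hk.le,
        mul_le_mul_of_nonneg_left h1 (neg_nonneg.2 hl.le)]
  · rintro ⟨hz, hpn⟩
    -- choose value t for the eliminated coordinate
    set s : ι → ℝ := fun k => ∑ i, A k i * y i with hs
    set U : ι → ℝ := fun k => (b k - s k) / c k with hU
    set N : Finset ι := Finset.univ.filter (fun l => c l < 0) with hN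
    set P : Finset ι := Finset.univ.filter (fun k => 0 < c k) with hP
    set t : ℝ := if hn : N.Nonempty then (N.image U).max' (hn.image U)
      else if hp : P.Nonempty then (P.image U).min' (hp.image U) else 0 with ht
    have pair : ∀ k, 0 < c k → ∀ l, c l < 0 → U l ≤ U k := by
      intro k hk l hl
      have h := hpn k hk l hl
      have expand : ∑ i, (c k * A l i - c l * A k i) * y i = c k * s l - c l * s k := by
        rw [hs, Finset.mul_sum, Finset.mul_sum, ← Finset.sum_sub_distrib]
        exact Finset.sum_congr rfl fun i _ => by ring
      rw [expand] at h
      have e1 : c l * U l = b l - s l := by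
        rw [hU]; field_simp [hl.ne]
      have e2 : c k * U k = b k - s k := by
        rw [hU]; field_simp [hk.ne']
      nlinarith [mul_pos hk (neg_pos.2 hl)]
    have tU : ∀ k, 0 < c k → t ≤ U k := by
      intro k hk
      rw [ht]
      split_ifs with hn hp
      · apply Finset.max'_le
        intro u hu
        obtain ⟨l, hl, rfl⟩ := Finset.mem_image.mp hu
        exact pair k hk l (Finset.mem_filter.mp hl).2
      · apply Finset.min'_le
        exact Finset.mem_image_of_mem U (Finset.mem_filter.mpr ⟨Finset.mem_univ _, hk⟩)
      · exact absurd ⟨k, Finset.mem_filter.mpr ⟨Finset.mem_univ _, hk⟩⟩ hp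
    have tL : ∀ l, c l < 0 → U l ≤ t := by
      intro l hl
      have hn : N.Nonempty := ⟨l, Finset.mem_filter.mpr ⟨Finset.mem_univ _, hl⟩⟩
      rw [ht, dif_pos hn]
      exact Finset.le_max' _ _
        (Finset.mem_image_of_mem U (Finset.mem_filter.mpr ⟨Finset.mem_univ _, hl⟩))
    refine ⟨fun o => Option.elim o t y, fun k => ?_, by ext i; simp⟩
    rw [Fintype.sum_option]
    show a k none * t + ∑ i, A k i * y i ≤ b k
    rcases lt_trichotomy (c k) 0 with hck | hck | hck
    · have h1 := tL k hck
      have e1 : c k * U k = b k - s k := by rw [hU]; field_simp [hck.ne]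
      have : c k * t ≤ c k * U k := mul_le_mul_of_nonpos_left h1 hck.le
      have hs' : s k = ∑ i, A k i * y i := rfl
      nlinarith
    · rw [show a k none = c k from rfl, hck]
      simpa using hz k hck
    · have h1 := tU k hck
      have e1 : c k * U k = b k - s k := by rw [hU]; field_simp [hck.ne']
      have : c k * t ≤ c k * U k := mul_le_mul_of_nonneg_left h1 hck.le
      have hs' : s k = ∑ i, A k i * y i := rfl
      nlinarith


set_option maxHeartbeats 1000000 in
lemma HP_elim_sum (β : Type) [Fintype β] (α : Type) [Fintype α]
    (S : Set (α ⊕ β → ℝ)) (hS : HP S) :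
    HP ((fun x : α ⊕ β → ℝ => x ∘ Sum.inl) '' S) := by
  revert α S
  have : ∀ (inst : Fintype β) (α : Type) (instα : Fintype α) (S : Set (α ⊕ β → ℝ)),
      HP S → HP ((fun x : α ⊕ β → ℝ => x ∘ Sum.inl) '' S) := by
    have fin : Finite β := Finite.of_fintype β
    induction β using Finite.induction_empty_option with
    | of_equiv e ih =>
      rename_i γ β'
      intro _ α _ S hS
      haveI : Fintype γ := Fintype.ofEquiv β' e.symm
      let f : (α ⊕ β') ≃ (α ⊕ γ) := Equiv.sumCongr (Equiv.refl α) e.symm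
      have h1 : HP ((fun x : α ⊕ β' → ℝ => x ∘ f.symm) '' S) := HP_reindex f hS
      have h3 := ih inferInstance ‹_› α ‹_› _ h1
      have heq : ((fun x : α ⊕ γ → ℝ => x ∘ Sum.inl) ''
          ((fun x : α ⊕ β' → ℝ => x ∘ f.symm) '' S))
          = (fun x : α ⊕ β' → ℝ => x ∘ Sum.inl) '' S := by
        rw [Set.image_image]
        apply Set.image_congr
        intro x _
        ext i
        show x (f.symm (Sum.inl i)) = x (Sum.inl i)
        congr 1
      rwa [heq] at h3
    | h_empty =>
      intro _ α _ S hS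
      let e : (α ⊕ PEmpty) ≃ α := Equiv.sumEmpty α PEmpty
      have heq : ((fun x : α ⊕ PEmpty → ℝ => x ∘ Sum.inl) '' S)
          = (fun x : α ⊕ PEmpty → ℝ => x ∘ e.symm) '' S := by
        apply Set.image_congr
        intro x _; ext i; rfl
      rw [heq]
      exact HP_reindex e hS
    | h_option ih =>
      rename_i γ _
      intro _ α _ S hS
      let g : (α ⊕ Option γ) ≃ Option (α ⊕ γ) :=
        (Equiv.sumCongr (Equiv.refl α) (Equiv.optionEquivSumPUnit.{0,0} γ)).trans
          ((Equiv.sumAssoc α γ PUnit.{1}).symm.trans (Equiv.optionEquivSumPUnit (α ⊕ γ)).symm)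
      have h1 : HP ((fun x : α ⊕ Option γ → ℝ => x ∘ g.symm) '' S) := HP_reindex g hS
      have h2 : HP ((fun x : Option (α ⊕ γ) → ℝ => x ∘ some) ''
          ((fun x : α ⊕ Option γ → ℝ => x ∘ g.symm) '' S)) := HP_FM h1
      have h3 := ih inferInstance ‹_› α ‹_› _ h2
      have heq : ((fun x : α ⊕ γ → ℝ => x ∘ Sum.inl) ''
          ((fun x : Option (α ⊕ γ) → ℝ => x ∘ some) ''
            ((fun x : α ⊕ Option γ → ℝ => x ∘ g.symm) '' S)))
          = (fun x : α ⊕ Option γ → ℝ => x ∘ Sum.inl) '' S := by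
        rw [Set.image_image, Set.image_image]
        apply Set.image_congr
        intro x _
        ext i
        show x (g.symm (some (Sum.inl i))) = x (Sum.inl i)
        congr 1
      rwa [heq] at h3
  exact this ‹_›

lemma HP_image_linear {α β : Type} [Fintype α] [Fintype β] (M : β → α → ℝ)
    {S : Set (α → ℝ)} (hS : HP S) :
    HP ((fun x : α → ℝ => fun j => ∑ i, M j i * x i) '' S) := by
  classical
  obtain ⟨ι, _, a, b, hSe⟩ := hS
  -- the "graph" polyhedron in (β ⊕ α → ℝ)
  set T : Set (β ⊕ α → ℝ) :=
    {z | ∀ k : (β ⊕ β) ⊕ ι,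
      ∑ i, (Sum.elim
        (Sum.elim
          (fun j => Sum.elim (fun j' => if j' = j then (1:ℝ) else 0) (fun i' => - M j i'))
          (fun j => Sum.elim (fun j' => if j' = j then (-1:ℝ) else 0) (fun i' => M j i')))
        (fun k => Sum.elim (fun _ => (0:ℝ)) (fun i' => a k i'))) k i * z i
        ≤ Sum.elim (Sum.elim (fun _ => (0:ℝ)) (fun _ => (0:ℝ))) b k} with hT
  have hTHP : HP T := ⟨_, inferInstance, _, _, rfl⟩
  have hTchar : ∀ z : β ⊕ α → ℝ, z ∈ T ↔
      ((∀ j, z (Sum.inl j) = ∑ i, M j i * z (Sum.inr i)) ∧ (z ∘ Sum.inr) ∈ S) := by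
    intro z
    rw [hT, Set.mem_setOf_eq, hSe]
    constructor
    · intro h
      constructor
      · intro j
        have h1 := h (Sum.inl (Sum.inl j))
        have h2 := h (Sum.inl (Sum.inr j))
        rw [Fintype.sum_sum_type] at h1 h2
        simp only [Sum.elim_inl, Sum.elim_inr] at h1 h2
        have h1' : z (Sum.inl j) - ∑ x : α, M j x * z (Sum.inr x) ≤ 0 := by
          have e1 : ∑ x : β, (if x = j then (1:ℝ) else 0) * z (Sum.inl x) = z (Sum.inl j) := by
            simp [ite_mul]
          have e2 : ∑ x : α, -M j x * z (Sum.inr x) = -∑ x : α, M j x * z (Sum.inr x) := by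
            simp [neg_mul]
          rw [e1, e2] at h1; linarith
        have h2' : -z (Sum.inl j) + ∑ x : α, M j x * z (Sum.inr x) ≤ 0 := by
          have e1 : ∑ x : β, (if x = j then (-1:ℝ) else 0) * z (Sum.inl x) = -z (Sum.inl j) := by
            simp [ite_mul]
          rw [e1] at h2
          exact h2
        linarith
      · intro k
        have h3 := h (Sum.inr k)
        rw [Fintype.sum_sum_type] at h3
        simpa using h3
    · rintro ⟨h1, h2⟩ k
      rcases k with k | k
      · rcases k with j | j
        · rw [Fintype.sum_sum_type]
          simp only [Sum.elim_inl, Sum.elim_inr]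
          have e1 : ∑ x : β, (if x = j then (1:ℝ) else 0) * z (Sum.inl x) = z (Sum.inl j) := by
            simp [ite_mul]
          have e2 : ∑ x : α, -M j x * z (Sum.inr x) = -∑ x : α, M j x * z (Sum.inr x) := by
            simp [neg_mul]
          rw [e1, e2, h1 j]
          simp
        · rw [Fintype.sum_sum_type]
          simp only [Sum.elim_inl, Sum.elim_inr]
          have e1 : ∑ x : β, (if x = j then (-1:ℝ) else 0) * z (Sum.inl x) = -z (Sum.inl j) := by
            simp [ite_mul]
          rw [e1, h1 j]
          simp
      · rw [Fintype.sum_sum_type]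
        simpa using h2 k
  have := HP_elim_sum α β T hTHP
  have himg : ((fun z : β ⊕ α → ℝ => z ∘ Sum.inl) '' T)
      = (fun x : α → ℝ => fun j => ∑ i, M j i * x i) '' S := by
    ext w
    constructor
    · rintro ⟨z, hz, rfl⟩
      rw [hTchar] at hz
      exact ⟨z ∘ Sum.inr, hz.2, by ext j; exact (hz.1 j).symm⟩
    · rintro ⟨x, hx, rfl⟩
      refine ⟨Sum.elim (fun j => ∑ i, M j i * x i) x, ?_, rfl⟩
      rw [hTchar]
      exact ⟨fun j => by simp, by simpa using hx⟩
  rwa [himg] at this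

lemma convexHull_range_char {d p : ℕ} (y : Fin p → EuclideanSpace ℝ (Fin d)) :
    convexHull ℝ (Set.range y) =
      {x | ∃ l : Fin p → ℝ, (∀ i, 0 ≤ l i) ∧ ∑ i, l i = 1 ∧ x = ∑ i, l i • y i} := by
  classical
  rw [convexHull_range_eq_exists_affineCombination]
  ext x
  constructor
  · rintro ⟨s, w, hw0, hw1, rfl⟩
    refine ⟨fun i => if i ∈ s then w i else 0, fun i => ?_, ?_, ?_⟩
    · dsimp only; split_ifs with h
      · exact hw0 i h
      · exact le_refl 0
    · simp only
      rw [Finset.sum_ite_mem, Finset.univ_inter, hw1]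
    · rw [Finset.affineCombination_eq_linear_combination s y w hw1]
      simp only
      have : ∀ i ∈ Finset.univ, (if i ∈ s then w i else 0) • y i
          = (if i ∈ s then w i • y i else 0) := by
        intro i _; split_ifs <;> simp
      rw [Finset.sum_congr rfl this]
      simp [Finset.sum_ite_mem]
  · rintro ⟨l, hl0, hl1, rfl⟩
    exact ⟨Finset.univ, l, fun i _ => hl0 i, hl1,
      (Finset.affineCombination_eq_linear_combination _ y l hl1)⟩

lemma HP_to_IsH {d : ℕ} (A : Set (EuclideanSpace ℝ (Fin d)))
    (h : HP (WithLp.toLp 2 ⁻¹' A)) : IsHPolyhedron A := by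
  obtain ⟨ι, _, a, b, hA⟩ := h
  let e := Fintype.equivFin ι
  refine ⟨Fintype.card ι, fun k => WithLp.toLp 2 (a (e.symm k)),
    fun k => b (e.symm k), ?_⟩
  ext x
  have hx : x ∈ A ↔ ∀ k : ι, ∑ i, a k i * x i ≤ b k := by
    change WithLp.toLp 2 (WithLp.ofLp x) ∈ A ↔ _
    rw [← Set.mem_preimage, hA]; rfl
  rw [hx, Set.mem_iInter]
  constructor
  · intro h k
    simp only [Set.mem_setOf_eq, PiLp.inner_apply, RCLike.inner_apply, conj_trivial]
    simpa only [mul_comm] using h (e.symm k)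
  · intro h k
    have := h (e k)
    simp only [Set.mem_setOf_eq, PiLp.inner_apply, RCLike.inner_apply, conj_trivial,
      Equiv.symm_apply_apply] at this
    simpa only [mul_comm] using this

lemma sum_apply_eucl {d n : ℕ} (f : Fin n → EuclideanSpace ℝ (Fin d)) (j : Fin d) :
    (∑ i, f i) j = ∑ i, f i j := by
  induction n with
  | zero => rfl
  | succ n ih =>
    rw [Fin.sum_univ_succ, Fin.sum_univ_succ, ← ih (fun i => f i.succ)]
    rfl

theorem vPolyhedron_is_hPolyhedron' (d : ℕ) (A : Set (EuclideanSpace ℝ (Fin d)))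
    (hA : IsVPolyhedron A) : IsHPolyhedron A := by
  classical
  obtain ⟨p, q, y, v, rfl⟩ := hA
  set S : Set (Fin p ⊕ Fin q → ℝ) :=
    {w | (∀ i, 0 ≤ w i) ∧ ∑ i : Fin p, w (Sum.inl i) = 1} with hSdef
  have hShp : HP S := by
    refine ⟨(Fin p ⊕ Fin q) ⊕ Bool, inferInstance,
      Sum.elim (fun i0 i => if i = i0 then (-1:ℝ) else 0)
        (fun bl => Sum.elim (fun _ : Fin p => if bl then (1:ℝ) else -1) (fun _ : Fin q => 0)),
      Sum.elim (fun _ => 0) (fun bl => if bl then (1:ℝ) else -1), ?_⟩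
    ext w
    simp only [hSdef, Set.mem_setOf_eq]
    have key : ∀ i0 : Fin p ⊕ Fin q,
        ∑ i, (if i = i0 then (-1:ℝ) else 0) * w i = -w i0 := by
      intro i0; simp [ite_mul]
    have keyT : ∑ i : Fin p ⊕ Fin q,
        (Sum.elim (fun _ : Fin p => (1:ℝ)) (fun _ : Fin q => 0)) i * w i
        = ∑ i : Fin p, w (Sum.inl i) := by
      rw [Fintype.sum_sum_type]; simp
    have keyF : ∑ i : Fin p ⊕ Fin q,
        (Sum.elim (fun _ : Fin p => (-1:ℝ)) (fun _ : Fin q => 0)) i * w i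
        = -∑ i : Fin p, w (Sum.inl i) := by
      rw [Fintype.sum_sum_type]; simp [neg_mul, ← Finset.sum_neg_distrib]
    constructor
    · rintro ⟨h0, h1⟩ k
      rcases k with i0 | bl
      · simp only [Sum.elim_inl]
        rw [key i0]; linarith [h0 i0]
      · rcases bl with _ | _
        · simp only [Sum.elim_inr, Bool.false_eq_true, if_false]
          rw [keyF]; linarith
        · simp only [Sum.elim_inr, if_true]
          rw [keyT]; linarith
    · intro h
      have ht := h (Sum.inr true)
      have hf := h (Sum.inr false)
      simp only [Sum.elim_inr, if_true, Bool.false_eq_true, if_false] at ht hf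
      rw [keyT] at ht
      rw [keyF] at hf
      refine ⟨fun i0 => ?_, by linarith⟩
      have hi := h (Sum.inl i0)
      simp only [Sum.elim_inl] at hi
      rw [key i0] at hi
      linarith
  set M : Fin d → (Fin p ⊕ Fin q) → ℝ :=
    fun j => Sum.elim (fun i => y i j) (fun i => v i j) with hM
  have him := HP_image_linear M hShp
  have keycomp : ∀ (l : Fin p → ℝ) (μ : Fin q → ℝ) (j : Fin d),
      ((∑ i, l i • y i) + (∑ i, μ i • v i) : EuclideanSpace ℝ (Fin d)) j
        = ∑ i : Fin p ⊕ Fin q, M j i * (Sum.elim l μ) i := by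
    intro l μ j
    rw [Fintype.sum_sum_type]
    have h1 : ((∑ i, l i • y i) + (∑ i, μ i • v i) : EuclideanSpace ℝ (Fin d)) j
        = (∑ i, l i • y i : EuclideanSpace ℝ (Fin d)) j
          + (∑ i, μ i • v i : EuclideanSpace ℝ (Fin d)) j := rfl
    rw [h1, sum_apply_eucl, sum_apply_eucl]
    simp only [hM, Sum.elim_inl, Sum.elim_inr]
    congr 1
    · exact Finset.sum_congr rfl fun i _ => mul_comm _ _
    · exact Finset.sum_congr rfl fun i _ => mul_comm _ _
  have hAeq : (WithLp.toLp 2 ⁻¹' (convexHull ℝ (Set.range y) + coneOf v))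
      = (fun x : (Fin p ⊕ Fin q) → ℝ => fun j => ∑ i, M j i * x i) '' S := by
    ext x
    rw [show (x ∈ (WithLp.toLp 2 ⁻¹' (convexHull ℝ (Set.range y) + coneOf v)))
      ↔ (WithLp.toLp 2 x : EuclideanSpace ℝ (Fin d)) ∈ convexHull ℝ (Set.range y) + coneOf v
      from Iff.rfl]
    rw [Set.mem_add]
    constructor
    · rintro ⟨u, hu, c, hc, hx⟩
      rw [convexHull_range_char] at hu
      obtain ⟨l, hl0, hl1, rfl⟩ := hu
      obtain ⟨μ, hμ0, rfl⟩ := hc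
      refine ⟨Sum.elim l μ, ⟨fun i => ?_, by simpa using hl1⟩, ?_⟩
      · rcases i with i | i
        · simpa using hl0 i
        · simpa using hμ0 i
      · funext j
        rw [show x = WithLp.ofLp (WithLp.toLp 2 x) from rfl, ← hx]
        exact (keycomp l μ j).symm
    · rintro ⟨w, ⟨hw0, hw1⟩, rfl⟩
      refine ⟨∑ i, w (Sum.inl i) • y i, ?_, ∑ i, w (Sum.inr i) • v i, ?_, ?_⟩
      · rw [convexHull_range_char]
        exact ⟨fun i => w (Sum.inl i), fun i => hw0 _, hw1, rfl⟩
      · exact ⟨fun i => w (Sum.inr i), fun i => hw0 _, rfl⟩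
      · refine PiLp.ext fun j => ?_
        have := keycomp (fun i => w (Sum.inl i)) (fun i => w (Sum.inr i)) j
        rw [this]
        show _ = ∑ i, M j i * w i
        congr 1
        funext i
        rcases i with i | i <;> rfl
  apply HP_to_IsH
  rw [hAeq]
  exact him

/-- Every `V`-polyhedron is an `H`-polyhedron; moreover, if `A ≠ ℝᵈ`, `A` has
nonempty interior and the origin lies in the interior of `A`, then `A` is of the
form `P(Y, 𝟏) = {x | ⟪yᵢ, x⟫ ≤ 1 for all i}`. -/
theorem vPolyhedron_is_hPolyhedron (d : ℕ) (A : Set (EuclideanSpace ℝ (Fin d)))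
    (hA : IsVPolyhedron A) :
    IsHPolyhedron A ∧
    (A ≠ Set.univ → (interior A).Nonempty →
      (0 : EuclideanSpace ℝ (Fin d)) ∈ interior A →
      ∃ (p : ℕ) (y : Fin p → EuclideanSpace ℝ (Fin d)),
        A = {x : EuclideanSpace ℝ (Fin d) | ∀ i, ⟪y i, x⟫ ≤ 1}) := by
  have hH := vPolyhedron_is_hPolyhedron' d A hA
  refine ⟨hH, fun _ _ h0 => ?_⟩
  obtain ⟨n, a, b, hrep⟩ := hH
  have h0A : (0 : EuclideanSpace ℝ (Fin d)) ∈ A := interior_subset h0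
  have hmem : ∀ x, x ∈ A ↔ ∀ k, ⟪a k, x⟫ ≤ b k := by
    intro x
    rw [hrep, Set.mem_iInter]
    exact Iff.rfl
  have hb : ∀ k, 0 ≤ b k := by
    intro k
    have := (hmem 0).mp h0A k
    simpa using this
  obtain ⟨ε, hε, hball⟩ := Metric.mem_nhds_iff.mp (mem_interior_iff_mem_nhds.mp h0)
  have hzero : ∀ k, b k = 0 → a k = 0 := by
    intro k hbk
    by_contra hak
    have hnorm : 0 < ‖a k‖ := norm_pos_iff.mpr hak
    set c : ℝ := ε / (2 * ‖a k‖) with hc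
    have hcpos : 0 < c := by positivity
    have hx : c • a k ∈ A := by
      apply hball
      rw [mem_ball_zero_iff, norm_smul, Real.norm_eq_abs, abs_of_pos hcpos, hc]
      have : ε / (2 * ‖a k‖) * ‖a k‖ = ε / 2 := by
        field_simp
      rw [this]
      linarith
    have hle := (hmem _).mp hx k
    rw [real_inner_smul_right, real_inner_self_eq_norm_sq, hbk] at hle
    nlinarith [mul_pos hcpos (pow_pos hnorm 2)]
  refine ⟨n, fun k => (b k)⁻¹ • a k, ?_⟩
  ext x
  rw [hmem x, Set.mem_setOf_eq]
  apply forall_congr'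
  intro k
  rcases eq_or_lt_of_le (hb k) with h | h
  · simp [hzero k h.symm, ← h]
  · rw [real_inner_smul_left, inv_mul_le_iff₀ h, mul_one]
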